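/- Suppose [x,y] is the only MUPS of S contained in the query interval [s,t], and let z = max(x-s, t-y). If S[x-z..y+z] is a palindrome, then [x-z, y+z] is the unique SUPS for [s,t]; otherwise, no SUPS for [s,t] exists. -/
import Mathlib


/-- `sub S i j` is the substring `S[i..j]`, 1-indexed and inclusive. -/
def sub (S : List Char) (i j : ℕ) : List Char := (S.drop (i-1)).take (j+1-i)

/-- A string is a palindrome if it equals its reversal. -/
def isPal (w : List Char) : Prop := w.reverse = w

/-- The set of (1-indexed) occurrence positions of `w` in `S`. -/
def occs (S w : List Char) : Finset ℕ :=
  (Finset.Icc 1 S.length).filter (fun p => sub S p (p + w.length - 1) = w)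

/-- `w` occurs exactly once in `S`. -/
def uniqueIn (S w : List Char) : Prop := (occs S w).card = 1

/-- `[i,j]` is (the interval of) a unique palindromic substring of `S`. -/
def UPS (S : List Char) (i j : ℕ) : Prop :=
  1 ≤ i ∧ i ≤ j ∧ j ≤ S.length ∧ isPal (sub S i j) ∧ uniqueIn S (sub S i j)

/-- `[i,j]` is a minimal unique palindromic substring of `S`. -/
def MUPS (S : List Char) (i j : ℕ) : Prop :=
  UPS S i j ∧ (j + 1 - i ≤ 2 ∨ 2 ≤ (occs S (sub S (i+1) (j-1))).card)

/-- `[i,j]` is a shortest unique palindromic substring of `S` for the query `[s,t]`. -/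
def SUPS (S : List Char) (s t i j : ℕ) : Prop :=
  UPS S i j ∧ i ≤ s ∧ s ≤ t ∧ t ≤ j ∧
    ∀ i' j', UPS S i' j' → i' ≤ s → t ≤ j' → j - i ≤ j' - i'

/- ### Auxiliary lemmas -/

lemma sub_length (S : List Char) (a b : ℕ) (h1 : 1 ≤ a) (hb : b ≤ S.length) :
    (sub S a b).length = b + 1 - a := by
  unfold sub
  rw [List.length_take, List.length_drop]
  omega

lemma sub_nest (S : List Char) (i j a b : ℕ) (h1 : 1 ≤ i) (hia : i ≤ a) (hbj : b ≤ j) :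
    sub S a b = ((sub S i j).drop (a - i)).take (b + 1 - a) := by
  unfold sub
  rw [List.drop_take, List.drop_drop, List.take_take]
  have e1 : i - 1 + (a - i) = a - 1 := by omega
  have e2 : (b + 1 - a) ⊓ (j + 1 - i - (a - i)) = b + 1 - a := by omega
  rw [e1, e2]

lemma sub_nest' (S : List Char) (i j d n : ℕ) (h1 : 1 ≤ i) (hij : i ≤ j)
    (hdn : d + n ≤ j + 1 - i) :
    sub S (i + d) (i + d + n - 1) = ((sub S i j).drop d).take n := by
  have h := sub_nest S i j (i + d) (i + d + n - 1) h1 (by omega) (by omega)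
  have e1 : i + d - i = d := by omega
  have e2 : i + d + n - 1 + 1 - (i + d) = n := by omega
  rwa [e1, e2] at h

lemma mem_occs {S w : List Char} {p : ℕ} :
    p ∈ occs S w ↔ 1 ≤ p ∧ p ≤ S.length ∧ sub S p (p + w.length - 1) = w := by
  simp [occs, Finset.mem_filter, Finset.mem_Icc, and_assoc]

lemma occ_le {S w : List Char} {p : ℕ} (hp : p ∈ occs S w) :
    p - 1 + w.length ≤ S.length := by
  obtain ⟨h1, h2, h3⟩ := mem_occs.mp hp
  have h4 := congrArg List.length h3
  unfold sub at h4
  rw [List.length_take, List.length_drop] at h4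
  omega

lemma self_occ (S : List Char) (a b : ℕ) (h1 : 1 ≤ a) (hab : a ≤ b) (hb : b ≤ S.length) :
    a ∈ occs S (sub S a b) := by
  rw [mem_occs]
  refine ⟨h1, le_trans hab hb, ?_⟩
  have e : a + (b + 1 - a) - 1 = b := by omega
  rw [sub_length S a b h1 hb, e]

lemma occ_factor (S : List Char) (i j a b p : ℕ) (h1 : 1 ≤ i) (hia : i ≤ a) (hab : a ≤ b)
    (hbj : b ≤ j) (hjS : j ≤ S.length) (hp : p ∈ occs S (sub S i j)) :
    p + (a - i) ∈ occs S (sub S a b) := by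
  obtain ⟨hp1, hpS, hpsub⟩ := mem_occs.mp hp
  have hij : i ≤ j := le_trans hia (le_trans hab hbj)
  have lW : (sub S i j).length = j + 1 - i := sub_length S i j h1 hjS
  have hbound : p - 1 + (sub S i j).length ≤ S.length := occ_le hp
  rw [mem_occs]
  have lU : (sub S a b).length = b + 1 - a := sub_length S a b (by omega) (by omega)
  refine ⟨by omega, by omega, ?_⟩
  rw [lU]
  have e3 : p + (a - i) + (b + 1 - a) - 1 = p + (a - i) + (b + 1 - a) - 1 := rfl
  have h2 := sub_nest' S p (p + (sub S i j).length - 1) (a - i) (b + 1 - a) hp1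
    (by omega) (by omega)
  rw [h2, hpsub, ← sub_nest S i j a b h1 hia hbj]

lemma unique_ext (S : List Char) (i j x y : ℕ) (h1 : 1 ≤ i) (hix : i ≤ x) (hxy : x ≤ y)
    (hyj : y ≤ j) (hjS : j ≤ S.length) (hu : uniqueIn S (sub S x y)) :
    uniqueIn S (sub S i j) := by
  have hmap : ∀ p ∈ occs S (sub S i j), p + (x - i) ∈ occs S (sub S x y) :=
    fun p hp => occ_factor S i j x y p h1 hix hxy hyj hjS hp
  have hle : (occs S (sub S i j)).card ≤ (occs S (sub S x y)).card :=
    Finset.card_le_card_of_injOn _ hmap (fun p _ q _ h => by omega)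
  have hmem : i ∈ occs S (sub S i j) := self_occ S i j h1 (by omega) hjS
  have hpos : 0 < (occs S (sub S i j)).card := Finset.card_pos.mpr ⟨i, hmem⟩
  unfold uniqueIn at *
  omega

lemma pal_central (W : List Char) (d m : ℕ) (hW : W.reverse = W) (hm : d + m + d = W.length) :
    ((W.drop d).take m).reverse = (W.drop d).take m := by
  have h1 : W.length - d - m = d := by omega
  have h2 : W.length - d - d = m := by omega
  rw [List.reverse_take, List.reverse_drop, hW, List.length_drop, h1, List.drop_take, h2]

lemma occ_rev (W U : List Char) (d : ℕ) (hW : W.reverse = W) (hU : U.reverse = U)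
    (h : (W.drop d).take U.length = U) (hd : d + U.length ≤ W.length) :
    (W.drop (W.length - U.length - d)).take U.length = U := by
  have h1 : W.length - d - U.length = W.length - U.length - d := by omega
  have h2 : W.length - d - (W.length - U.length - d) = U.length := by omega
  have key : ((W.drop d).take U.length).reverse
      = (W.drop (W.length - U.length - d)).take U.length := by
    rw [List.reverse_take, List.reverse_drop, hW, List.length_drop, h1, List.drop_take, h2]
  rw [h, hU] at key
  exact key.symm

lemma sub_pal_central (S : List Char) (i j a b : ℕ) (h1 : 1 ≤ i) (hia : i ≤ a) (hab : a ≤ b)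
    (hbj : b ≤ j) (hjS : j ≤ S.length) (hmir : a - i = j - b) (hP : isPal (sub S i j)) :
    isPal (sub S a b) := by
  unfold isPal at *
  rw [sub_nest S i j a b h1 hia hbj]
  exact pal_central (sub S i j) (a - i) (b + 1 - a) hP
    (by rw [sub_length S i j h1 hjS]; omega)

/-- Key mirror lemma: a unique palindromic substring `[x,y]` inside a palindromic
substring `[i,j]` must be centered at the center of `[i,j]`. -/
lemma mirror (S : List Char) (i j x y : ℕ) (h1 : 1 ≤ i) (hix : i ≤ x) (hxy : x ≤ y)
    (hyj : y ≤ j) (hjS : j ≤ S.length) (hP : isPal (sub S i j)) (hp : isPal (sub S x y))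
    (hu : uniqueIn S (sub S x y)) : x - i = j - y := by
  have lW : (sub S i j).length = j + 1 - i := sub_length S i j h1 hjS
  have lu : (sub S x y).length = y + 1 - x := sub_length S x y (by omega) (by omega)
  have hocc : ((sub S i j).drop (x - i)).take (sub S x y).length = sub S x y := by
    rw [lu]; exact (sub_nest S i j x y h1 hix hyj).symm
  have hrev := occ_rev (sub S i j) (sub S x y) (x - i) hP hp hocc (by omega)
  have he : (sub S i j).length - (sub S x y).length - (x - i) = j - y := by omega
  rw [he] at hrev
  have key : sub S (i + (j - y)) (i + (j - y) + (sub S x y).length - 1) = sub S x y := by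
    rw [sub_nest' S i j (j - y) (sub S x y).length h1 (by omega) (by omega)]
    exact hrev
  have hx : x ∈ occs S (sub S x y) := self_occ S x y (by omega) hxy (by omega)
  have hp2 : i + (j - y) ∈ occs S (sub S x y) := by
    rw [mem_occs]
    exact ⟨by omega, by omega, key⟩
  have := Finset.card_le_one.mp (le_of_eq hu) x hx (i + (j - y)) hp2
  omega

theorem stmt8 (S : List Char) (s t x y : ℕ) (hst : s ≤ t)
    (hm : MUPS S x y) (hc : s ≤ x ∧ y ≤ t)
    (honly : ∀ x' y', MUPS S x' y' → s ≤ x' → y' ≤ t → x' = x ∧ y' = y) :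
    ∀ i j, SUPS S s t i j ↔
      (1 ≤ x - max (x - s) (t - y) ∧ y + max (x - s) (t - y) ≤ S.length ∧
       isPal (sub S (x - max (x - s) (t - y)) (y + max (x - s) (t - y))) ∧
       i = x - max (x - s) (t - y) ∧ j = y + max (x - s) (t - y)) := by
  obtain ⟨⟨hx1, hxy, hyS, hpalxy, huxy⟩, -⟩ := hm
  obtain ⟨hsx, hyt⟩ := hc
  intro i j
  set z := max (x - s) (t - y) with hz
  have hz1 : x - s ≤ z := le_max_left _ _
  have hz2 : t - y ≤ z := le_max_right _ _
  have hzc : z = x - s ∨ z = t - y := max_choice _ _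
  constructor
  · rintro ⟨⟨hi1, hij, hjS, hpalW, huW⟩, his, hst', htj, hminim⟩
    have hix : i ≤ x := le_trans his hsx
    have hyj : y ≤ j := le_trans hyt htj
    have hmir : x - i = j - y := mirror S i j x y hi1 hix hxy hyj hjS hpalW hpalxy huxy
    have hkz : z ≤ x - i := by omega
    have hL1 : 1 ≤ x - z := by omega
    have hRS : y + z ≤ S.length := by omega
    have hpalLR : isPal (sub S (x - z) (y + z)) :=
      sub_pal_central S i j (x - z) (y + z) hi1 (by omega) (by omega) (by omega) hjS
        (by omega) hpalW
    have hupsLR : UPS S (x - z) (y + z) :=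
      ⟨hL1, by omega, hRS, hpalLR,
        unique_ext S (x - z) (y + z) x y hL1 (by omega) hxy (by omega) hRS huxy⟩
    have hle := hminim (x - z) (y + z) hupsLR (by omega) (by omega)
    exact ⟨hL1, hRS, hpalLR, by omega, by omega⟩
  · rintro ⟨hL1, hRS, hpalLR, hi, hj⟩
    subst hi; subst hj
    refine ⟨⟨hL1, by omega, hRS, hpalLR,
      unique_ext S (x - z) (y + z) x y hL1 (by omega) hxy (by omega) hRS huxy⟩,
      by omega, hst, by omega, ?_⟩
    intro i' j' hups' hi's htj'
    obtain ⟨hi'1, hi'j', hj'S, hpal', hu'⟩ := hups'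
    have hmir' : x - i' = j' - y :=
      mirror S i' j' x y hi'1 (le_trans hi's hsx) hxy (le_trans hyt htj') hj'S hpal' hpalxy huxy
    omega
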